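/- With N, q, the matrices M_U, M_V, M_W, and the matrix C_R = C_R(u,v,u′,v′,h) as in the context, suppose u, v, h, u′, v′ are nonzero complex numbers with u^N ≠ −1, (u′)^N = h^N / (u^N·v^N·(1 + u^{−N})²), and (v′)^N = (1 + u^N)²·v^N. Then the following three matrix identities hold: (a) M_W(u,v,h)·C_R = (1 + q·M_U(u)⁻¹)·(1 + q³·M_U(u)⁻¹)·C_R·M_U(u′); (b) (1 + q·M_U(u))·(1 + q³·M_U(u))·M_V(v)·C_R = C_R·M_V(v′); (c) M_U(u)·C_R·M_W(u′,v′,h) = C_R. -/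

import Mathlib

open Matrix

/-- The image of the generator `U` of the Chekhov–Fock algebra of the once-punctured torus
under the standard representation: the diagonal matrix with entries `u·q^{4i}`. -/
noncomputable def MU (N : ℕ) (q u : ℂ) : Matrix (Fin N) (Fin N) ℂ :=
  Matrix.diagonal fun i => u * q ^ (4 * (i : ℕ))

/-- The image of the generator `V`: the cyclic shift matrix with entries `v`. -/
noncomputable def MV (N : ℕ) (v : ℂ) : Matrix (Fin N) (Fin N) ℂ :=
  Matrix.of fun i j => if (j : ℕ) = ((i : ℕ) + 1) % N then v else 0

/-- The image of the generator `W`: `q⁻²·h·(M_U(u)·M_V(v))⁻¹`. -/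
noncomputable def MW (N : ℕ) (q u v h : ℂ) : Matrix (Fin N) (Fin N) ℂ :=
  ((q ^ 2)⁻¹ * h) • (MU N q u * MV N v)⁻¹

/-- The intertwining matrix `C_R(u,v,u′,v′,h)`, with `(i,j)`-entry
`q^{2(j−i)²}·(u′v′/(uh))^{j−i}·(v′/v)^i·∏_{α=1}^{i}[(1+q^{4α−3}u)(1+q^{4α−1}u)]⁻¹`. -/
noncomputable def CR (N : ℕ) (q u v u' v' h : ℂ) : Matrix (Fin N) (Fin N) ℂ :=
  Matrix.of fun i j =>
    q ^ (2 * ((j : ℤ) - (i : ℤ)) ^ 2) *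
      (u' * v' / (u * h)) ^ ((j : ℤ) - (i : ℤ)) *
      (v' / v) ^ (i : ℕ) *
      ∏ α ∈ Finset.range (i : ℕ),
        ((1 + q ^ (4 * α + 1) * u) * (1 + q ^ (4 * α + 3) * u))⁻¹

open Matrix

namespace Stmt8Aux

/-- successor mod N on `Fin N` -/
def fs (N : ℕ) (hNpos : 0 < N) (i : Fin N) : Fin N := ⟨((i : ℕ) + 1) % N, Nat.mod_lt _ hNpos⟩

/-- predecessor mod N on `Fin N` -/
def fp (N : ℕ) (hNpos : 0 < N) (i : Fin N) : Fin N := ⟨((i : ℕ) + (N - 1)) % N, Nat.mod_lt _ hNpos⟩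

lemma fs_fp (N : ℕ) (hNpos : 0 < N) (j : Fin N) : fs N hNpos (fp N hNpos j) = j := by
  apply Fin.ext
  show ((((j : ℕ) + (N - 1)) % N) + 1) % N = (j : ℕ)
  rw [Nat.mod_add_mod, show (j : ℕ) + (N - 1) + 1 = (j : ℕ) + N by omega,
    Nat.add_mod_right, Nat.mod_eq_of_lt j.isLt]

lemma fp_fs (N : ℕ) (hNpos : 0 < N) (j : Fin N) : fp N hNpos (fs N hNpos j) = j := by
  apply Fin.ext
  show ((((j : ℕ) + 1) % N) + (N - 1)) % N = (j : ℕ)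
  rw [Nat.mod_add_mod, show (j : ℕ) + 1 + (N - 1) = (j : ℕ) + N by omega,
    Nat.add_mod_right, Nat.mod_eq_of_lt j.isLt]

lemma fs_inj (N : ℕ) (hNpos : 0 < N) : Function.Injective (fs N hNpos) := by
  intro a b hab
  rw [← fp_fs N hNpos a, hab, fp_fs]

lemma fs_dvd (N : ℕ) (hNpos : 0 < N) (j : Fin N) :
    (N : ℤ) ∣ ((fs N hNpos j : ℕ) : ℤ) - ((j : ℕ) + 1) := by
  have h := Nat.mod_add_div ((j : ℕ) + 1) N
  refine ⟨-((((j : ℕ) + 1) / N : ℕ) : ℤ), ?_⟩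
  have h2 : (((((j : ℕ) + 1) % N : ℕ) : ℤ)) + (N : ℤ) * ((((j : ℕ) + 1) / N : ℕ) : ℤ)
      = ((j : ℕ) : ℤ) + 1 := by exact_mod_cast h
  show ((((j : ℕ) + 1) % N : ℕ) : ℤ) - (((j : ℕ) : ℤ) + 1) = _
  linarith

lemma zpow_eq_of_dvd {N : ℕ} (x : ℂ) (hx0 : x ≠ 0) (hxN : x ^ N = 1) {a b : ℤ}
    (hab : (N : ℤ) ∣ a - b) : x ^ a = x ^ b := by
  obtain ⟨k, hk⟩ := hab
  have ha : a = b + (N : ℤ) * k := by linarith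
  rw [ha, zpow_add₀ hx0, _root_.zpow_mul, zpow_natCast, hxN, _root_.one_zpow, mul_one]

lemma qsq_eq {N : ℕ} (q : ℂ) (hq0 : q ≠ 0) (hqN : q ^ N = 1) {a b : ℤ}
    (hab : (N : ℤ) ∣ a - b) : q ^ (2 * a ^ 2) = q ^ (2 * b ^ 2) := by
  obtain ⟨k, hk⟩ := hab
  exact zpow_eq_of_dvd q hq0 hqN ⟨k * 2 * (a + b), by linear_combination (2 * (a + b)) * hk⟩

lemma pow_mod {N : ℕ} (x : ℂ) (hxN : x ^ N = 1) (m : ℕ) : x ^ (m % N) = x ^ m := by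
  conv_rhs => rw [← Nat.mod_add_div m N]
  rw [pow_add, pow_mul, hxN, one_pow, mul_one]

lemma factor_ne {N : ℕ} {q u : ℂ} (hN : Odd N) (hqN : q ^ N = 1) (hun : u ^ N ≠ -1) :
    ∀ m : ℕ, 1 + q ^ m * u ≠ 0 := by
  intro m hzero
  apply hun
  have h1 : q ^ m * u = -1 := by linear_combination hzero
  have h2 : (q ^ m * u) ^ N = (-1 : ℂ) ^ N := by rw [h1]
  rw [mul_pow, ← pow_mul, mul_comm m N, pow_mul, hqN, one_pow, one_mul, hN.neg_one_pow] at h2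
  exact h2

lemma prod_full {N : ℕ} {q : ℂ} (hN : Odd N) (hNpos : 0 < N) (hq : IsPrimitiveRoot q N)
    (u : ℂ) (s : ℕ) :
    ∏ α ∈ Finset.range N, (1 + q ^ (4 * α + s) * u) = 1 + u ^ N := by
  haveI : NeZero N := ⟨hNpos.ne'⟩
  have hqN : q ^ N = 1 := hq.pow_eq_one
  have h2 : ¬ (2 ∣ N) := by have := Nat.odd_iff.mp hN; omega
  have hcop : Nat.Coprime 4 N := by
    have h2' : Nat.Coprime 2 N := (Nat.prime_two.coprime_iff_not_dvd).mpr h2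
    have := h2'.pow_left 2
    norm_num at this
    exact this
  set w : (ZMod N)ˣ := ZMod.unitOfCoprime 4 hcop with hw
  have hwc : ((w : ZMod N)) = (4 : ℕ) := ZMod.coe_unitOfCoprime 4 hcop
  have key : ∀ a : ℕ, ((4 * a + s : ℕ) : ZMod N) = (w : ZMod N) * (a : ℕ) + (s : ℕ) := by
    intro a; push_cast [hwc]; push_cast; ring
  have hmain : (1 : ℂ) ^ N + u ^ N
      = ∏ ζ ∈ Polynomial.nthRootsFinset N (1 : ℂ), (1 + ζ * u) :=
    hq.pow_add_pow_eq_prod_add_mul 1 u hN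
  rw [show (1 : ℂ) + u ^ N = (1 : ℂ) ^ N + u ^ N by rw [one_pow], hmain]
  refine Finset.prod_bij (fun α _ => q ^ (4 * α + s)) ?_ ?_ ?_ ?_
  · intro a _
    rw [Polynomial.mem_nthRootsFinset hNpos, ← pow_mul, mul_comm, pow_mul, hqN, one_pow]
  · intro a ha b hb hab
    simp only [Finset.mem_range] at ha hb
    rw [← pow_mod q hqN (4 * a + s), ← pow_mod q hqN (4 * b + s)] at hab
    have := hq.pow_inj (Nat.mod_lt _ hNpos) (Nat.mod_lt _ hNpos) hab
    have hz : ((4 * a + s : ℕ) : ZMod N) = ((4 * b + s : ℕ) : ZMod N) := by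
      rw [ZMod.natCast_eq_natCast_iff', this]
    rw [key a, key b] at hz
    have hww : ((w⁻¹ : (ZMod N)ˣ) : ZMod N) * (w : ZMod N) = 1 := by
      rw [← Units.val_mul, inv_mul_cancel, Units.val_one]
    have hz1 : (w : ZMod N) * ((a : ℕ) : ZMod N) = (w : ZMod N) * ((b : ℕ) : ZMod N) := by
      linear_combination hz
    have hz2 : ((a : ℕ) : ZMod N) = ((b : ℕ) : ZMod N) := by
      have ha2 : ((a : ℕ) : ZMod N) = (w⁻¹ : (ZMod N)ˣ) * ((w : ZMod N) * ((a : ℕ) : ZMod N)) := by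
        rw [← mul_assoc, hww, one_mul]
      rw [ha2, hz1, ← mul_assoc, hww, one_mul]
    have : a % N = b % N := by rw [← ZMod.natCast_eq_natCast_iff']; exact hz2
    rwa [Nat.mod_eq_of_lt ha, Nat.mod_eq_of_lt hb] at this
  · intro b hb
    rw [Polynomial.mem_nthRootsFinset hNpos] at hb
    obtain ⟨i, hi, hqi⟩ := hq.eq_pow_of_pow_eq_one hb
    set α : ℕ := ((w⁻¹ : (ZMod N)ˣ) * (((i : ℕ) : ZMod N) - ((s : ℕ) : ZMod N))).val with hα
    refine ⟨α, Finset.mem_range.mpr (ZMod.val_lt _), ?_⟩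
    have hzmod : ((4 * α + s : ℕ) : ZMod N) = ((i : ℕ) : ZMod N) := by
      rw [key α]
      have hval : ((α : ℕ) : ZMod N)
          = (w⁻¹ : (ZMod N)ˣ) * (((i : ℕ) : ZMod N) - ((s : ℕ) : ZMod N)) :=
        ZMod.natCast_rightInverse _
      rw [hval, ← mul_assoc]
      have : (w : ZMod N) * ((w⁻¹ : (ZMod N)ˣ) : ZMod N) = 1 := by
        rw [← Units.val_mul, mul_inv_cancel, Units.val_one]
      rw [this, one_mul]
      ring
    have hmod : (4 * α + s) % N = i % N := by rwa [← ZMod.natCast_eq_natCast_iff']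
    show q ^ (4 * α + s) = b
    rw [← pow_mod q hqN (4 * α + s), hmod, pow_mod q hqN i, hqi]
  · intro a _; rfl



variable {N : ℕ} {q u v h u' v' : ℂ}

lemma CR_apply (N : ℕ) (q u v u' v' h : ℂ) (i j : Fin N) :
    CR N q u v u' v' h i j
      = q ^ (2 * ((j : ℤ) - (i : ℤ)) ^ 2) *
        (u' * v' / (u * h)) ^ ((j : ℤ) - (i : ℤ)) *
        (v' / v) ^ (i : ℕ) *
        ∏ α ∈ Finset.range (i : ℕ),
          ((1 + q ^ (4 * α + 1) * u) * (1 + q ^ (4 * α + 3) * u))⁻¹ := rfl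

lemma CR_ne (hNpos : 0 < N) (hq0 : q ≠ 0) (hu : u ≠ 0) (hv : v ≠ 0) (hh : h ≠ 0)
    (hu' : u' ≠ 0) (hv' : v' ≠ 0) (hfac : ∀ m : ℕ, 1 + q ^ m * u ≠ 0) (i j : Fin N) :
    CR N q u v u' v' h i j ≠ 0 := by
  rw [CR_apply]
  have hA0 : u' * v' / (u * h) ≠ 0 := by
    apply div_ne_zero (mul_ne_zero hu' hv') (mul_ne_zero hu hh)
  refine mul_ne_zero (mul_ne_zero (mul_ne_zero ?_ ?_) ?_) ?_
  · exact zpow_ne_zero _ hq0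
  · exact zpow_ne_zero _ hA0
  · exact pow_ne_zero _ (div_ne_zero hv' hv)
  · rw [Finset.prod_ne_zero_iff]
    intro α _
    exact inv_ne_zero (mul_ne_zero (hfac _) (hfac _))

lemma CR_row (hNpos : 0 < N) (hq0 : q ≠ 0) (hqN : q ^ N = 1)
    (hA0 : u' * v' / (u * h) ≠ 0)
    (hA1 : (u' * v' / (u * h)) ^ N = 1)
    (hB : (v' / v) ^ N
      = ∏ α ∈ Finset.range N, ((1 + q ^ (4 * α + 1) * u) * (1 + q ^ (4 * α + 3) * u)))
    (hfac : ∀ m : ℕ, 1 + q ^ m * u ≠ 0)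
    (i j : Fin N) :
    CR N q u v u' v' h (fs N hNpos i) j
        * ((1 + q ^ (4 * (i : ℕ) + 1) * u) * (1 + q ^ (4 * (i : ℕ) + 3) * u))
        * (u' * v' / (u * h)) * q ^ (2 * ((j : ℤ) - (i : ℤ)) ^ 2)
      = CR N q u v u' v' h i j * (v' / v) * q ^ (2 * ((j : ℤ) - (i : ℤ) - 1) ^ 2) := by
  have hD0 : ∀ m : ℕ, (1 + q ^ (4 * m + 1) * u) * (1 + q ^ (4 * m + 3) * u) ≠ 0 :=
    fun m => mul_ne_zero (hfac _) (hfac _)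
  rcases Nat.lt_or_ge ((i : ℕ) + 1) N with hlt | hge
  · -- no wraparound
    have hval : ((fs N hNpos i : Fin N) : ℕ) = (i : ℕ) + 1 := Nat.mod_eq_of_lt hlt
    rw [CR_apply, CR_apply, hval, Finset.prod_range_succ]
    push_cast
    rw [show ((j : ℤ) - (((i : ℕ) : ℤ) + 1)) = ((j : ℤ) - ((i : ℕ) : ℤ) - 1) from by ring]
    have e2 : (v' / v) ^ ((i : ℕ) + 1) = (v' / v) ^ (i : ℕ) * (v' / v) := pow_succ _ _
    rw [e2]
    have hinv : (∏ α ∈ Finset.range (i : ℕ),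
        ((1 + q ^ (4 * α + 1) * u) * (1 + q ^ (4 * α + 3) * u))⁻¹)
        * ((1 + q ^ (4 * (i : ℕ) + 1) * u) * (1 + q ^ (4 * (i : ℕ) + 3) * u))⁻¹
        * ((1 + q ^ (4 * (i : ℕ) + 1) * u) * (1 + q ^ (4 * (i : ℕ) + 3) * u))
        = ∏ α ∈ Finset.range (i : ℕ),
        ((1 + q ^ (4 * α + 1) * u) * (1 + q ^ (4 * α + 3) * u))⁻¹ := by
      rw [mul_assoc, inv_mul_cancel₀ (hD0 _), mul_one]
    have e3 : (u' * v' / (u * h)) ^ ((j : ℤ) - ((i : ℕ) : ℤ))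
        = (u' * v' / (u * h)) ^ ((j : ℤ) - ((i : ℕ) : ℤ) - 1) * (u' * v' / (u * h)) := by
      rw [← zpow_add_one₀ hA0]
      congr 1
      ring
    rw [e3]
    linear_combination
      (q ^ (2 * ((j : ℤ) - ((i : ℕ) : ℤ) - 1) ^ 2) * q ^ (2 * ((j : ℤ) - ((i : ℕ) : ℤ)) ^ 2)
        * (u' * v' / (u * h)) ^ ((j : ℤ) - ((i : ℕ) : ℤ) - 1) * (u' * v' / (u * h))
        * (v' / v) ^ (i : ℕ) * (v' / v)) * hinv
  · -- wraparound : (i : ℕ) + 1 = N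
    have hiN : (i : ℕ) + 1 = N := le_antisymm (by exact_mod_cast i.isLt) hge
    have hcast : ((i : ℕ) : ℤ) = (N : ℤ) - 1 := by
      have h' := hiN
      push_cast [← h']
      ring
    have hval : ((fs N hNpos i : Fin N) : ℕ) = 0 := by
      show ((i : ℕ) + 1) % N = 0
      rw [hiN, Nat.mod_self]
    rw [CR_apply, CR_apply, hval]
    simp only [Nat.cast_zero, sub_zero, pow_zero, Finset.prod_range_zero, one_mul, mul_one]
    have hprodsplit : ∏ α ∈ Finset.range N,
        ((1 + q ^ (4 * α + 1) * u) * (1 + q ^ (4 * α + 3) * u))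
        = (∏ α ∈ Finset.range (i : ℕ),
            ((1 + q ^ (4 * α + 1) * u) * (1 + q ^ (4 * α + 3) * u)))
          * ((1 + q ^ (4 * (i : ℕ) + 1) * u) * (1 + q ^ (4 * (i : ℕ) + 3) * u)) := by
      conv_lhs => rw [← hiN]
      rw [Finset.prod_range_succ]
    have hP0 : (∏ α ∈ Finset.range (i : ℕ),
        ((1 + q ^ (4 * α + 1) * u) * (1 + q ^ (4 * α + 3) * u))) ≠ 0 := by
      rw [Finset.prod_ne_zero_iff]; intro α _; exact hD0 α
    have hPinv : (∏ α ∈ Finset.range (i : ℕ),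
        ((1 + q ^ (4 * α + 1) * u) * (1 + q ^ (4 * α + 3) * u))⁻¹)
        = (∏ α ∈ Finset.range (i : ℕ),
        ((1 + q ^ (4 * α + 1) * u) * (1 + q ^ (4 * α + 3) * u)))⁻¹ :=
      Finset.prod_inv_distrib _
    have hPP : (∏ α ∈ Finset.range (i : ℕ),
        ((1 + q ^ (4 * α + 1) * u) * (1 + q ^ (4 * α + 3) * u)))⁻¹
        * (∏ α ∈ Finset.range (i : ℕ),
        ((1 + q ^ (4 * α + 1) * u) * (1 + q ^ (4 * α + 3) * u))) = 1 :=
      inv_mul_cancel₀ hP0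
    have hBpow : (v' / v) ^ (i : ℕ) * (v' / v)
        = (∏ α ∈ Finset.range (i : ℕ),
            ((1 + q ^ (4 * α + 1) * u) * (1 + q ^ (4 * α + 3) * u)))
          * ((1 + q ^ (4 * (i : ℕ) + 1) * u) * (1 + q ^ (4 * (i : ℕ) + 3) * u)) := by
      rw [← hprodsplit, ← hB]
      conv_rhs => rw [← hiN]
      rw [pow_succ]
    have hq2 : q ^ (2 * ((j : ℤ) - ((i : ℕ) : ℤ) - 1) ^ 2) = q ^ (2 * ((j : ℤ)) ^ 2) := by
      apply qsq_eq q hq0 hqN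
      exact ⟨-1, by rw [hcast]; ring⟩
    have hA2 : (u' * v' / (u * h)) ^ ((j : ℤ) - ((i : ℕ) : ℤ))
        = (u' * v' / (u * h)) ^ ((j : ℤ)) * (u' * v' / (u * h)) := by
      rw [← zpow_add_one₀ hA0]
      apply zpow_eq_of_dvd _ hA0 hA1
      exact ⟨-1, by rw [hcast]; ring⟩
    have hkey : (∏ α ∈ Finset.range (i : ℕ),
        ((1 + q ^ (4 * α + 1) * u) * (1 + q ^ (4 * α + 3) * u)))⁻¹
        * ((v' / v) ^ (i : ℕ) * (v' / v))
        = (1 + q ^ (4 * (i : ℕ) + 1) * u) * (1 + q ^ (4 * (i : ℕ) + 3) * u) := by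
      rw [hBpow, ← mul_assoc, hPP, one_mul]
    rw [hq2, hA2, hPinv, ← hkey]
    ring

lemma CR_col (hNpos : 0 < N) (hq0 : q ≠ 0) (hqN : q ^ N = 1)
    (hA0 : u' * v' / (u * h) ≠ 0)
    (hA1 : (u' * v' / (u * h)) ^ N = 1)
    (i j : Fin N) :
    CR N q u v u' v' h i (fs N hNpos j) * q ^ (2 * ((j : ℤ) - (i : ℤ)) ^ 2)
      = CR N q u v u' v' h i j * (u' * v' / (u * h))
          * q ^ (2 * ((j : ℤ) + 1 - (i : ℤ)) ^ 2) := by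
  rcases Nat.lt_or_ge ((j : ℕ) + 1) N with hlt | hge
  · have hval : ((fs N hNpos j : Fin N) : ℕ) = (j : ℕ) + 1 := Nat.mod_eq_of_lt hlt
    rw [CR_apply, CR_apply, hval]
    push_cast
    have e1 : (2 * (((j : ℕ) + 1 : ℤ) - (i : ℤ)) ^ 2) = 2 * ((j : ℤ) + 1 - (i : ℤ)) ^ 2 := by
      ring
    have e2 : (u' * v' / (u * h)) ^ (((j : ℕ) + 1 : ℤ) - (i : ℤ))
        = (u' * v' / (u * h)) ^ ((j : ℤ) - (i : ℤ)) * (u' * v' / (u * h)) := by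
      rw [← zpow_add_one₀ hA0]
      congr 1
      ring
    rw [e1, e2]
    ring
  · have hjN : (j : ℕ) + 1 = N := le_antisymm (by exact_mod_cast j.isLt) hge
    have hval : ((fs N hNpos j : Fin N) : ℕ) = 0 := by
      show ((j : ℕ) + 1) % N = 0
      rw [hjN, Nat.mod_self]
    rw [CR_apply, CR_apply, hval]
    have hcast : ((j : ℕ) : ℤ) = (N : ℤ) - 1 := by
      have := hjN
      push_cast [← this]
      ring
    have hA2 : ((0 : ℤ) - (i : ℤ)) - ((j : ℤ) + 1 - (i : ℤ)) = -(N : ℤ) := by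
      rw [hcast]; ring
    have hq2 : q ^ (2 * ((0 : ℤ) - (i : ℤ)) ^ 2) = q ^ (2 * ((j : ℤ) + 1 - (i : ℤ)) ^ 2) := by
      apply qsq_eq q hq0 hqN
      exact ⟨-1, by rw [hA2]; ring⟩
    have hA3 : (u' * v' / (u * h)) ^ ((0 : ℤ) - (i : ℤ))
        = (u' * v' / (u * h)) ^ ((j : ℤ) - (i : ℤ)) * (u' * v' / (u * h)) := by
      rw [← zpow_add_one₀ hA0]
      apply zpow_eq_of_dvd _ hA0 hA1
      exact ⟨-1, by rw [show (j:ℤ) - (i:ℤ) + 1 = (j:ℤ) + 1 - (i:ℤ) by ring, hA2]; ring⟩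
    push_cast
    rw [hq2, hA3]
    ring

end Stmt8Aux

open Stmt8Aux in
set_option maxHeartbeats 2000000 in
/-- The matrix `C_R` intertwines the representation `χ_{u′,v′,h}` with `χ_{u,v,h} ∘ ℛ`. -/
theorem stmt8 (N : ℕ) (hN : Odd N) (hNpos : 0 < N) (q : ℂ) (hq : IsPrimitiveRoot q N)
    (u v h u' v' : ℂ) (hu : u ≠ 0) (hv : v ≠ 0) (hh : h ≠ 0)
    (hu' : u' ≠ 0) (hv' : v' ≠ 0) (hun : u ^ N ≠ -1)
    (hu'N : u' ^ N = h ^ N / (u ^ N * v ^ N * (1 + (u ^ N)⁻¹) ^ 2))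
    (hv'N : v' ^ N = (1 + u ^ N) ^ 2 * v ^ N) :
    MW N q u v h * CR N q u v u' v' h
      = (1 + q • (MU N q u)⁻¹) * (1 + q ^ 3 • (MU N q u)⁻¹) * CR N q u v u' v' h * MU N q u' ∧
    (1 + q • MU N q u) * (1 + q ^ 3 • MU N q u) * MV N v * CR N q u v u' v' h
      = CR N q u v u' v' h * MV N v' ∧
    MU N q u * CR N q u v u' v' h * MW N q u' v' h = CR N q u v u' v' h := by
  have hq0 : q ≠ 0 := hq.ne_zero hNpos.ne'
  have hqN : q ^ N = 1 := hq.pow_eq_one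
  have hone : (1 : ℂ) + u ^ N ≠ 0 := fun hcon => hun (by linear_combination hcon)
  have huN0 : u ^ N ≠ 0 := pow_ne_zero _ hu
  have hinv0 : (1 : ℂ) + (u ^ N)⁻¹ ≠ 0 := by
    intro hcon
    apply hone
    field_simp at hcon
    linear_combination hcon
  have hfac : ∀ m : ℕ, 1 + q ^ m * u ≠ 0 := factor_ne hN hqN hun
  have hA0 : u' * v' / (u * h) ≠ 0 := div_ne_zero (mul_ne_zero hu' hv') (mul_ne_zero hu hh)
  have hD : ∏ α ∈ Finset.range N, ((1 + q ^ (4 * α + 1) * u) * (1 + q ^ (4 * α + 3) * u))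
      = (1 + u ^ N) ^ 2 := by
    rw [Finset.prod_mul_distrib, prod_full hN hNpos hq u 1, prod_full hN hNpos hq u 3]
    ring
  have hB : (v' / v) ^ N
      = ∏ α ∈ Finset.range N, ((1 + q ^ (4 * α + 1) * u) * (1 + q ^ (4 * α + 3) * u)) := by
    rw [hD, div_pow, hv'N]
    field_simp
  have hiu : (1 : ℂ) + (u ^ N)⁻¹ = (1 + u ^ N) / u ^ N := by
    field_simp
    ring
  have hvN0 : v ^ N ≠ 0 := pow_ne_zero _ hv
  have hhN0 : h ^ N ≠ 0 := pow_ne_zero _ hh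
  have hA1 : (u' * v' / (u * h)) ^ N = 1 := by
    have h1 : u' ^ N * v' ^ N = u ^ N * h ^ N := by
      rw [hu'N, hv'N, hiu]
      field_simp
    rw [div_pow, mul_pow, mul_pow, h1, div_self (mul_ne_zero huN0 hhN0)]
  -- entry description of MV
  have hMV_apply : ∀ (b : ℂ) (i k : Fin N),
      MV N b i k = if k = fs N hNpos i then b else 0 := by
    intro b i k
    show (if (k : ℕ) = ((i : ℕ) + 1) % N then b else 0) = _
    have hiff : ((k : ℕ) = ((i : ℕ) + 1) % N) ↔ (k = fs N hNpos i) := by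
      rw [Fin.ext_iff]
      exact Iff.rfl
    by_cases hk : k = fs N hNpos i
    · rw [if_pos (hiff.mpr hk), if_pos hk]
    · rw [if_neg (fun hc => hk (hiff.mp hc)), if_neg hk]
  -- inverse of MU
  have hMU_inv : ∀ a : ℂ, a ≠ 0 → (MU N q a)⁻¹
      = Matrix.diagonal (fun i : Fin N => (a * q ^ (4 * (i : ℕ)))⁻¹) := by
    intro a ha
    apply Matrix.inv_eq_right_inv
    rw [MU, Matrix.diagonal_mul_diagonal, ← Matrix.diagonal_one]
    congr 1
    funext k
    field_simp
  -- entry description of MW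
  have hMW : ∀ a b c : ℂ, a ≠ 0 → b ≠ 0 → ∀ i k : Fin N,
      MW N q a b c i k
        = if i = fs N hNpos k then ((q ^ 2)⁻¹ * c) * ((a * q ^ (4 * (k : ℕ))) * b)⁻¹ else 0 := by
    intro a b c ha hb i k
    have hMUMV : ∀ i k : Fin N, (MU N q a * MV N b) i k
        = if k = fs N hNpos i then a * q ^ (4 * (i : ℕ)) * b else 0 := by
      intro i k
      rw [MU, Matrix.diagonal_mul, hMV_apply]
      simp [mul_ite]
    have hXinv : (MU N q a * MV N b)⁻¹
        = Matrix.of (fun i k : Fin N =>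
            if i = fs N hNpos k then ((a * q ^ (4 * (k : ℕ))) * b)⁻¹ else 0) := by
      apply Matrix.inv_eq_right_inv
      ext i j
      rw [Matrix.mul_apply]
      simp only [hMUMV, Matrix.of_apply, ite_mul, zero_mul, mul_ite, mul_zero]
      rw [Finset.sum_ite_eq']
      rw [Matrix.one_apply]
      by_cases hij : i = j
      · subst hij
        simp only [Finset.mem_univ, if_true]
        field_simp
      · have hne : fs N hNpos i ≠ fs N hNpos j := fun hc => hij (fs_inj N hNpos hc)
        simp [hij, hne, Ne.symm hne]
    rw [MW, hXinv]
    simp [Matrix.smul_apply, mul_ite]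
  refine ⟨?_, ?_, ?_⟩
  · -- identity (a)
    have hdiag : ∀ c : ℂ, (1 : Matrix (Fin N) (Fin N) ℂ) + c • (MU N q u)⁻¹
        = Matrix.diagonal (fun i : Fin N => 1 + c * (u * q ^ (4 * (i : ℕ)))⁻¹) := by
      intro c
      rw [hMU_inv u hu]
      ext i k
      by_cases hik : i = k
      · subst hik
        simp
      · simp [Matrix.one_apply_ne hik, Matrix.diagonal_apply_ne _ hik, hik]
    have key : ∀ i j : Fin N,
        (MW N q u v h * CR N q u v u' v' h) (fs N hNpos i) j
        = ((1 + q • (MU N q u)⁻¹) * (1 + q ^ 3 • (MU N q u)⁻¹) * CR N q u v u' v' h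
            * MU N q u') (fs N hNpos i) j := by
      intro i j
      have hL : (MW N q u v h * CR N q u v u' v' h) (fs N hNpos i) j
          = ((q ^ 2)⁻¹ * h) * ((u * q ^ (4 * (i : ℕ))) * v)⁻¹ * CR N q u v u' v' h i j := by
        rw [Matrix.mul_apply]
        have hrow : ∀ x : Fin N, MW N q u v h (fs N hNpos i) x
            = if x = i then ((q ^ 2)⁻¹ * h) * ((u * q ^ (4 * (x : ℕ))) * v)⁻¹ else 0 := by
          intro x
          rw [hMW u v h hu hv]
          by_cases hx : x = i
          · subst hx
            simp
          · have h1 : fs N hNpos i ≠ fs N hNpos x := fun hc => hx (fs_inj N hNpos hc).symm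
            simp [hx, h1]
        simp only [hrow, ite_mul, zero_mul]
        rw [Finset.sum_ite_eq']
        simp
      have hR : ((1 + q • (MU N q u)⁻¹) * (1 + q ^ 3 • (MU N q u)⁻¹) * CR N q u v u' v' h
            * MU N q u') (fs N hNpos i) j
          = (1 + q * (u * q ^ (4 * ((fs N hNpos i : Fin N) : ℕ)))⁻¹)
            * (1 + q ^ 3 * (u * q ^ (4 * ((fs N hNpos i : Fin N) : ℕ)))⁻¹)
            * CR N q u v u' v' h (fs N hNpos i) j * (u' * q ^ (4 * (j : ℕ))) := by
        rw [hdiag q, hdiag (q ^ 3), Matrix.diagonal_mul_diagonal, MU]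
        rw [Matrix.mul_diagonal, Matrix.diagonal_mul]
        try simp only [Pi.mul_apply]
        try ring
      rw [hL, hR]
      have hq4 : q ^ (4 * ((fs N hNpos i : Fin N) : ℕ)) = q ^ (4 * ((i : ℕ) + 1)) := by
        show q ^ (4 * (((i : ℕ) + 1) % N)) = _
        rw [pow_mul, pow_mul]
        exact pow_mod (q ^ 4) (by rw [← pow_mul, mul_comm, pow_mul, hqN, one_pow]) ((i : ℕ) + 1)
      rw [hq4]
      have he1 : (1 : ℂ) + q * (u * q ^ (4 * ((i : ℕ) + 1)))⁻¹
          = (1 + q ^ (4 * (i : ℕ) + 3) * u) / (u * q ^ (4 * (i : ℕ) + 3)) := by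
        rw [eq_div_iff (mul_ne_zero hu (pow_ne_zero _ hq0))]
        field_simp
        ring
      have he3 : (1 : ℂ) + q ^ 3 * (u * q ^ (4 * ((i : ℕ) + 1)))⁻¹
          = (1 + q ^ (4 * (i : ℕ) + 1) * u) / (u * q ^ (4 * (i : ℕ) + 1)) := by
        rw [eq_div_iff (mul_ne_zero hu (pow_ne_zero _ hq0))]
        field_simp
        ring
      rw [he1, he3]
      have hR1 := CR_row (q := q) (u := u) (v := v) (h := h) (u' := u') (v' := v')
        hNpos hq0 hqN hA0 hA1 hB hfac i j
      have hd1 : (1 : ℂ) + q ^ (4 * (i : ℕ) + 1) * u ≠ 0 := hfac _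
      have hd3 : (1 : ℂ) + q ^ (4 * (i : ℕ) + 3) * u ≠ 0 := hfac _
      have hqz1 : q ^ (2 * ((j : ℤ) - (i : ℤ)) ^ 2) ≠ 0 := zpow_ne_zero _ hq0
      have hCne : CR N q u v u' v' h i j ≠ 0 := CR_ne hNpos hq0 hu hv hh hu' hv' hfac i j
      generalize hgen2 : CR N q u v u' v' h (fs N hNpos i) j = c2 at hR1 ⊢
      generalize hgen1 : CR N q u v u' v' h i j = c1 at hR1 hCne ⊢
      generalize hgd1 : (1 : ℂ) + q ^ (4 * (i : ℕ) + 1) * u = d1 at hR1 hd1 ⊢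
      generalize hgd3 : (1 : ℂ) + q ^ (4 * (i : ℕ) + 3) * u = d3 at hR1 hd3 ⊢
      have hfr : c2
          = c1 * (v' / v) * q ^ (2 * ((j : ℤ) - (i : ℤ) - 1) ^ 2)
            / (d1 * d3 * (u' * v' / (u * h)) * q ^ (2 * ((j : ℤ) - (i : ℤ)) ^ 2)) := by
        rw [eq_div_iff (mul_ne_zero (mul_ne_zero (mul_ne_zero hd1 hd3) hA0) hqz1)]
        linear_combination hR1
      rw [hfr]
      have hE1 : q ^ (2 * ((j : ℤ) - (i : ℤ) - 1) ^ 2)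
          = q ^ (2 * ((j : ℤ) - (i : ℤ)) ^ 2) * q ^ (4 * (i : ℕ) + 4)
            / (q ^ (4 * (j : ℕ)) * q ^ 2) := by
        rw [eq_div_iff (mul_ne_zero (pow_ne_zero _ hq0) (pow_ne_zero _ hq0))]
        rw [← zpow_natCast q (4 * (j : ℕ)), ← zpow_natCast q (4 * (i : ℕ) + 4),
          ← zpow_natCast q 2, ← zpow_add₀ hq0, ← zpow_add₀ hq0, ← zpow_add₀ hq0]
        congr 1
        push_cast
        ring
      rw [hE1]
      generalize hgt0 : q ^ (2 * ((j : ℤ) - (i : ℤ)) ^ 2) = t0 at hqz1 ⊢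
      field_simp [hd1, hd3, hA0, hqz1]
      rw [eq_comm]
      try rw [div_eq_iff (by simp [hu, hv, hh, hu', hv', hq0, hd1, hd3, hqz1, pow_ne_zero])]
      ring
    apply Matrix.ext
    intro i j
    have h2 := key (fp N hNpos i) j
    rwa [fs_fp] at h2
  · -- identity (b)
    have hdiag2 : ∀ c : ℂ, (1 : Matrix (Fin N) (Fin N) ℂ) + c • MU N q u
        = Matrix.diagonal (fun i : Fin N => 1 + c * (u * q ^ (4 * (i : ℕ)))) := by
      intro c
      rw [MU]
      ext i k
      by_cases hik : i = k
      · subst hik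
        simp
      · simp [Matrix.one_apply_ne hik, Matrix.diagonal_apply_ne _ hik, hik]
    have key : ∀ i j : Fin N,
        ((1 + q • MU N q u) * (1 + q ^ 3 • MU N q u) * MV N v * CR N q u v u' v' h)
            i (fs N hNpos j)
        = (CR N q u v u' v' h * MV N v') i (fs N hNpos j) := by
      intro i j
      have hdd : (1 + q • MU N q u) * (1 + q ^ 3 • MU N q u)
          = Matrix.diagonal (fun k : Fin N =>
              (1 + q * (u * q ^ (4 * (k : ℕ)))) * (1 + q ^ 3 * (u * q ^ (4 * (k : ℕ))))) := by
        rw [hdiag2 q, hdiag2 (q ^ 3), Matrix.diagonal_mul_diagonal]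
      have hL : ((1 + q • MU N q u) * (1 + q ^ 3 • MU N q u) * MV N v * CR N q u v u' v' h)
            i (fs N hNpos j)
          = (1 + q * (u * q ^ (4 * (i : ℕ)))) * (1 + q ^ 3 * (u * q ^ (4 * (i : ℕ))))
            * v * CR N q u v u' v' h (fs N hNpos i) (fs N hNpos j) := by
        rw [hdd]
        rw [Matrix.mul_apply]
        have hrow : ∀ x : Fin N, ((Matrix.diagonal (fun k : Fin N =>
              (1 + q * (u * q ^ (4 * (k : ℕ)))) * (1 + q ^ 3 * (u * q ^ (4 * (k : ℕ)))))
              * MV N v : Matrix (Fin N) (Fin N) ℂ)) i x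
            = if x = fs N hNpos i then
                (1 + q * (u * q ^ (4 * (i : ℕ)))) * (1 + q ^ 3 * (u * q ^ (4 * (i : ℕ)))) * v
              else 0 := by
          intro x
          rw [Matrix.diagonal_mul, hMV_apply]
          simp [mul_ite]
        simp only [hrow, ite_mul, zero_mul]
        rw [Finset.sum_ite_eq']
        simp
      have hRb : (CR N q u v u' v' h * MV N v') i (fs N hNpos j)
          = CR N q u v u' v' h i j * v' := by
        rw [Matrix.mul_apply]
        have hcol : ∀ x : Fin N, MV N v' x (fs N hNpos j)
            = if x = j then v' else 0 := by
          intro x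
          rw [hMV_apply]
          by_cases hx : x = j
          · subst hx
            simp
          · have h1 : fs N hNpos j ≠ fs N hNpos x := fun hc => hx (fs_inj N hNpos hc).symm
            simp [hx, h1]
        simp only [hcol, mul_ite, mul_zero]
        rw [Finset.sum_ite_eq']
        simp
      rw [hL, hRb]
      -- exponent bookkeeping for the shifted column index
      have hdv := fs_dvd N hNpos j
      have hqA : q ^ (2 * (((fs N hNpos j : Fin N) : ℤ) - (i : ℤ)) ^ 2)
          = q ^ (2 * ((j : ℤ) + 1 - (i : ℤ)) ^ 2) := by
        apply qsq_eq q hq0 hqN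
        obtain ⟨k, hk⟩ := hdv
        exact ⟨k, by linear_combination hk⟩
      have hqB : q ^ (2 * (((fs N hNpos j : Fin N) : ℤ) - (i : ℤ) - 1) ^ 2)
          = q ^ (2 * ((j : ℤ) - (i : ℤ)) ^ 2) := by
        apply qsq_eq q hq0 hqN
        obtain ⟨k, hk⟩ := hdv
        exact ⟨k, by linear_combination hk⟩
      have hR1 := CR_row (q := q) (u := u) (v := v) (h := h) (u' := u') (v' := v')
        hNpos hq0 hqN hA0 hA1 hB hfac i (fs N hNpos j)
      rw [hqA, hqB] at hR1
      have hR2 := CR_col (q := q) (u := u) (v := v) (h := h) (u' := u') (v' := v')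
        hNpos hq0 hqN hA0 hA1 i j
      have hd1 : (1 : ℂ) + q ^ (4 * (i : ℕ) + 1) * u ≠ 0 := hfac _
      have hd3 : (1 : ℂ) + q ^ (4 * (i : ℕ) + 3) * u ≠ 0 := hfac _
      have hq1 : q ^ (2 * ((j : ℤ) + 1 - (i : ℤ)) ^ 2) ≠ 0 := zpow_ne_zero _ hq0
      have hq2 : q ^ (2 * ((j : ℤ) - (i : ℤ)) ^ 2) ≠ 0 := zpow_ne_zero _ hq0
      have hgb1 : (1 : ℂ) + q * (u * q ^ (4 * (i : ℕ)))
          = 1 + q ^ (4 * (i : ℕ) + 1) * u := by ring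
      have hgb3 : (1 : ℂ) + q ^ 3 * (u * q ^ (4 * (i : ℕ)))
          = 1 + q ^ (4 * (i : ℕ) + 3) * u := by ring
      rw [hgb1, hgb3]
      generalize hgen3 : CR N q u v u' v' h (fs N hNpos i) (fs N hNpos j) = c3 at hR1 ⊢
      generalize hgen2 : CR N q u v u' v' h i (fs N hNpos j) = c2 at hR1 hR2 ⊢
      generalize hgen1 : CR N q u v u' v' h i j = c1 at hR2 ⊢
      generalize hgd1 : (1 : ℂ) + q ^ (4 * (i : ℕ) + 1) * u = d1 at hR1 hd1 ⊢
      generalize hgd3 : (1 : ℂ) + q ^ (4 * (i : ℕ) + 3) * u = d3 at hR1 hd3 ⊢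
      have hfr1 : c3
          = c2 * (v' / v) * q ^ (2 * ((j : ℤ) - (i : ℤ)) ^ 2)
            / (d1 * d3 * (u' * v' / (u * h)) * q ^ (2 * ((j : ℤ) + 1 - (i : ℤ)) ^ 2)) := by
        rw [eq_div_iff (mul_ne_zero (mul_ne_zero (mul_ne_zero hd1 hd3) hA0) hq1)]
        linear_combination hR1
      have hfr2 : c2
          = c1 * (u' * v' / (u * h))
              * q ^ (2 * ((j : ℤ) + 1 - (i : ℤ)) ^ 2) / q ^ (2 * ((j : ℤ) - (i : ℤ)) ^ 2) := by
        rw [eq_div_iff hq2]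
        linear_combination hR2
      rw [hfr1, hfr2]
      generalize hgt1 : q ^ (2 * ((j : ℤ) + 1 - (i : ℤ)) ^ 2) = t1 at hq1 ⊢
      generalize hgt0 : q ^ (2 * ((j : ℤ) - (i : ℤ)) ^ 2) = t0 at hq2 ⊢
      field_simp [hd1, hd3, hA0, hq1, hq2]
      try rw [div_eq_iff (by simp [hu, hv, hh, hu', hv', hq0, hd1, hd3, hq1, hq2, pow_ne_zero])]
    apply Matrix.ext
    intro i j
    have h2 := key i (fp N hNpos j)
    rwa [fs_fp] at h2
  · -- identity (c)
    apply Matrix.ext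
    intro i j
    rw [Matrix.mul_apply]
    have hcol : ∀ x : Fin N, MW N q u' v' h x j
        = if x = fs N hNpos j then ((q ^ 2)⁻¹ * h) * ((u' * q ^ (4 * (j : ℕ))) * v')⁻¹ else 0 :=
      fun x => by rw [hMW u' v' h hu' hv']
    simp only [hcol, mul_ite, mul_zero]
    rw [Finset.sum_ite_eq']
    simp only [Finset.mem_univ, if_true]
    have hMUCR : (MU N q u * CR N q u v u' v' h) i (fs N hNpos j)
        = u * q ^ (4 * (i : ℕ)) * CR N q u v u' v' h i (fs N hNpos j) := by
      rw [MU, Matrix.diagonal_mul]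
    rw [hMUCR]
    have hq2 : q ^ (2 * ((j : ℤ) - (i : ℤ)) ^ 2) ≠ 0 := zpow_ne_zero _ hq0
    have hR2 := CR_col (q := q) (u := u) (v := v) (h := h) (u' := u') (v' := v')
      hNpos hq0 hqN hA0 hA1 i j
    generalize hgen2 : CR N q u v u' v' h i (fs N hNpos j) = c2 at hR2 ⊢
    generalize hgen1 : CR N q u v u' v' h i j = c1 at hR2 ⊢
    have hfr2 : c2
        = c1 * (u' * v' / (u * h))
            * q ^ (2 * ((j : ℤ) + 1 - (i : ℤ)) ^ 2) / q ^ (2 * ((j : ℤ) - (i : ℤ)) ^ 2) := by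
      rw [eq_div_iff hq2]
      linear_combination hR2
    rw [hfr2]
    have hE2 : q ^ (2 * ((j : ℤ) + 1 - (i : ℤ)) ^ 2)
        = q ^ (2 * ((j : ℤ) - (i : ℤ)) ^ 2) * q ^ (4 * (j : ℕ) + 2) / q ^ (4 * (i : ℕ)) := by
      rw [eq_div_iff (pow_ne_zero _ hq0)]
      rw [← zpow_natCast q (4 * (j : ℕ) + 2), ← zpow_natCast q (4 * (i : ℕ)),
        ← zpow_add₀ hq0, ← zpow_add₀ hq0]
      congr 1
      push_cast
      ring
    rw [hE2]
    generalize hgt0 : q ^ (2 * ((j : ℤ) - (i : ℤ)) ^ 2) = t0 at hq2 ⊢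
    field_simp [hq2, hA0]
    try rw [div_eq_iff (by simp [hu, hv, hh, hu', hv', hq0, hq2, pow_ne_zero])]
    ring
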